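/- With notation as in the setup, for all i, j ∈ {1,…,n} one has A^0_{Φ_{{i}}} = A^0_{Φ_{{j}}} in ℂ[Γ]. (All CM types of signature (n−1,1) of the unitary CM field E = kF yield the same class function; this underlies the Yang–Yin proof of the Colmez conjecture in signature (n−1,1).) -/

import Mathlib

open MonoidAlgebra Finset

noncomputable section

/-- `Γ = G × ℤ/2ℤ` (written multiplicatively). -/
abbrev Gam (G : Type*) := G × Multiplicative (ZMod 2)

/-- The element `ρ = (1,1) ∈ Γ` ("complex conjugation"). -/
def rhoEl (G : Type*) [Group G] : Gam G := (1, Multiplicative.ofAdd (1 : ZMod 2))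

/-- Embedding of `g ∈ G` into `ℂ[Γ]` via `g ↦ (g,0)`. -/
def emb {G : Type*} [Group G] (g : G) : MonoidAlgebra ℂ (Gam G) :=
  MonoidAlgebra.of ℂ (Gam G) (g, 1)

/-- `ρ` as an element of `ℂ[Γ]`. -/
def rho (G : Type*) [Group G] : MonoidAlgebra ℂ (Gam G) :=
  MonoidAlgebra.of ℂ (Gam G) (rhoEl G)

/-- `T = Σ_{g ∈ G} g ∈ ℂ[Γ]`. -/
def Tsum (G : Type*) [Group G] [Fintype G] : MonoidAlgebra ℂ (Gam G) :=
  ∑ g : G, emb g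

/-- `Σ_{x ∈ H} a·x·b ∈ ℂ[Γ]`. -/
def cosetSum {G : Type*} [Group G] [Fintype G] (H : Subgroup G) [DecidablePred (· ∈ H)]
    (a b : G) : MonoidAlgebra ℂ (Gam G) :=
  ∑ x : H, emb (a * (x : G) * b)

/-- `Φ_S = T + (ρ-1)·Σ_{i∈S} Σ_{x∈H} σ_i x ∈ ℂ[Γ]`, the CM type attached to `S`. -/
def Phi {G : Type*} [Group G] [Fintype G] (H : Subgroup G) [DecidablePred (· ∈ H)] {n : ℕ}
    (σ : Fin n → G) (S : Finset (Fin n)) : MonoidAlgebra ℂ (Gam G) :=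
  Tsum G + (rho G - 1) * ∑ i ∈ S, cosetSum H (σ i) 1

/-- The ℂ-linear map `ι : ℂ[Γ] → ℂ[Γ]` sending each `γ ∈ Γ` to `γ⁻¹`. -/
def iota (Γ : Type*) [Group Γ] : MonoidAlgebra ℂ Γ →ₗ[ℂ] MonoidAlgebra ℂ Γ :=
  MonoidAlgebra.mapDomainLinearMap ℂ ℂ fun γ : Γ => γ⁻¹

/-- `A_{Φ_S} = (1/(2hn))·Φ_S·ι(Φ_S)`. -/
def Afun {G : Type*} [Group G] [Fintype G] (H : Subgroup G) [DecidablePred (· ∈ H)] {n : ℕ}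
    (σ : Fin n → G) (S : Finset (Fin n)) : MonoidAlgebra ℂ (Gam G) :=
  ((2 * (Nat.card H) * n : ℂ))⁻¹ • (Phi H σ S * iota (Gam G) (Phi H σ S))

/-- `A⁰_{Φ_S} = (1/|Γ|)·Σ_{γ∈Γ} γ·A_{Φ_S}·γ⁻¹`. -/
def A0 {G : Type*} [Group G] [Fintype G] (H : Subgroup G) [DecidablePred (· ∈ H)] {n : ℕ}
    (σ : Fin n → G) (S : Finset (Fin n)) : MonoidAlgebra ℂ (Gam G) :=
  ((Fintype.card (Gam G) : ℂ))⁻¹ •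
    ∑ γ : Gam G, MonoidAlgebra.of ℂ (Gam G) γ * Afun H σ S * MonoidAlgebra.of ℂ (Gam G) γ⁻¹

set_option linter.unusedSectionVars false

section Aux

variable {G : Type*} [Group G] [Fintype G]

lemma iota_of (γ : Gam G) :
    iota (Gam G) (MonoidAlgebra.of ℂ (Gam G) γ) = MonoidAlgebra.of ℂ (Gam G) γ⁻¹ := by
  rw [MonoidAlgebra.of_apply]
  show MonoidAlgebra.mapDomainLinearMap ℂ ℂ _ _ = _
  rw [MonoidAlgebra.mapDomainLinearMap_single]
  rfl

lemma rhoEl_comm (γ : Gam G) : Commute (rhoEl G) γ := by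
  obtain ⟨g, s⟩ := γ
  show _ = _
  simp [rhoEl, Prod.ext_iff, mul_comm]

lemma rho_comm (a : MonoidAlgebra ℂ (Gam G)) : Commute (rho G) a := by
  have : rho G = MonoidAlgebra.single (rhoEl G) (1 : ℂ) := rfl
  rw [this]
  exact MonoidAlgebra.single_commute rhoEl_comm (fun b => Commute.all _ b) a

lemma rhosub_comm (a : MonoidAlgebra ℂ (Gam G)) : Commute (rho G - 1) a :=
  (rho_comm a).sub_left (Commute.one_left a)

lemma tau_sq : (Multiplicative.ofAdd (1:ZMod 2)) * Multiplicative.ofAdd 1 = 1 := by decide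
lemma tau_inv : (Multiplicative.ofAdd (1:ZMod 2))⁻¹ = Multiplicative.ofAdd 1 := by decide
lemma gam_inv (g : G) (s : Multiplicative (ZMod 2)) : ((g, s) : Gam G)⁻¹ = (g⁻¹, s⁻¹) := rfl

lemma rho_sq : rho G * rho G = 1 := by
  have h : rhoEl G * rhoEl G = 1 := Prod.ext (one_mul _) tau_sq
  rw [rho, ← map_mul, h, map_one]

lemma rhosub_sq : (rho G - 1) * (rho G - 1) = (-2 : ℂ) • (rho G - 1) := by
  rw [mul_sub, sub_mul, sub_mul, rho_sq]
  simp only [mul_one, one_mul]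
  module

lemma emb_mul (a b : G) : emb a * emb b = emb (a * b) := by
  rw [emb, emb, ← map_mul]; rfl

lemma Tsum_mul_emb (g : G) : Tsum G * emb g = Tsum G := by
  rw [Tsum, Finset.sum_mul]
  simp_rw [emb_mul]
  exact Fintype.sum_equiv (Equiv.mulRight g) _ _ (fun x => rfl)

lemma emb_mul_Tsum (g : G) : emb g * Tsum G = Tsum G := by
  rw [Tsum, Finset.mul_sum]
  simp_rw [emb_mul]
  exact Fintype.sum_equiv (Equiv.mulLeft g) _ _ (fun x => rfl)

lemma iota_Tsum : iota (Gam G) (Tsum G) = Tsum G := by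
  rw [Tsum, map_sum]
  simp_rw [emb, iota_of]
  have : ∀ g : G, ((g : G), (1 : Multiplicative (ZMod 2)))⁻¹ = (g⁻¹, 1) := by
    intro g; rw [gam_inv, inv_one]
  simp_rw [this]
  exact Fintype.sum_equiv (Equiv.inv G) _ _ (fun x => rfl)

lemma rhosub_mul_emb (g : G) :
    (rho G - 1) * emb g =
      MonoidAlgebra.of ℂ (Gam G) (g, Multiplicative.ofAdd (1 : ZMod 2)) -
        MonoidAlgebra.of ℂ (Gam G) (g, 1) := by
  rw [sub_mul, one_mul, rho, emb, ← map_mul]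
  congr 2
  exact Prod.ext (one_mul g) (mul_one _)

lemma iota_rhosub_mul_emb (g : G) :
    iota (Gam G) ((rho G - 1) * emb g) = (rho G - 1) * emb g⁻¹ := by
  rw [rhosub_mul_emb, map_sub, iota_of, iota_of, rhosub_mul_emb g⁻¹]
  rw [gam_inv, gam_inv, tau_inv, inv_one]

lemma Tsum_mul_sum {ι : Type*} [Fintype ι] (f : ι → G) :
    Tsum G * (∑ x : ι, emb (f x)) = (Fintype.card ι : ℂ) • Tsum G := by
  rw [Finset.mul_sum]
  simp_rw [Tsum_mul_emb]
  rw [Finset.sum_const, Finset.card_univ, Nat.cast_smul_eq_nsmul]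

lemma sum_mul_Tsum {ι : Type*} [Fintype ι] (f : ι → G) :
    (∑ x : ι, emb (f x)) * Tsum G = (Fintype.card ι : ℂ) • Tsum G := by
  rw [Finset.sum_mul]
  simp_rw [emb_mul_Tsum]
  rw [Finset.sum_const, Finset.card_univ, Nat.cast_smul_eq_nsmul]

variable (H : Subgroup G) [DecidablePred (· ∈ H)]

lemma coset_mul (a : G) :
    cosetSum H a 1 * (∑ y : H, emb ((a * (y : G))⁻¹))
      = (Fintype.card H : ℂ) • cosetSum H a a⁻¹ := by
  rw [cosetSum, Finset.sum_mul]
  simp_rw [Finset.mul_sum, emb_mul, mul_one]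
  have key : ∀ x : H, ∑ y : H, emb ((a * (x : G)) * (a * (y : G))⁻¹)
      = ∑ z : H, emb (a * (z : G) * a⁻¹) := by
    intro x
    refine Fintype.sum_equiv ((Equiv.inv H).trans (Equiv.mulLeft x)) _ _ ?_
    intro y
    congr 1
    show a * (x : G) * (a * (y : G))⁻¹ = a * ((x * y⁻¹ : H) : G) * a⁻¹
    push_cast
    group
  simp_rw [key]
  rw [Finset.sum_const, Finset.card_univ, Nat.cast_smul_eq_nsmul, cosetSum]

lemma phi_mul_iota (a : G) :
    (Tsum G + (rho G - 1) * cosetSum H a 1) *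
      iota (Gam G) (Tsum G + (rho G - 1) * cosetSum H a 1)
      = (Fintype.card G : ℂ) • Tsum G
        + (2 * Fintype.card H : ℂ) • ((rho G - 1) * Tsum G)
        - (2 * Fintype.card H : ℂ) • ((rho G - 1) * cosetSum H a a⁻¹) := by
  have hiota : iota (Gam G) (Tsum G + (rho G - 1) * cosetSum H a 1)
      = Tsum G + (rho G - 1) * (∑ y : H, emb ((a * (y : G))⁻¹)) := by
    rw [map_add, iota_Tsum, cosetSum, Finset.mul_sum, map_sum]
    simp_rw [mul_one, iota_rhosub_mul_emb]
    rw [Finset.mul_sum]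
  rw [hiota, mul_add, add_mul, add_mul]
  have h1 : Tsum G * Tsum G = (Fintype.card G : ℂ) • Tsum G := Tsum_mul_sum (fun g => g)
  have h2 : Tsum G * ((rho G - 1) * (∑ y : H, emb ((a * (y : G))⁻¹)))
      = (Fintype.card H : ℂ) • ((rho G - 1) * Tsum G) := by
    rw [← mul_assoc, ← (rhosub_comm (Tsum G)).eq, mul_assoc, Tsum_mul_sum, mul_smul_comm]
  have h3 : ((rho G - 1) * cosetSum H a 1) * Tsum G
      = (Fintype.card H : ℂ) • ((rho G - 1) * Tsum G) := by
    rw [mul_assoc, cosetSum, sum_mul_Tsum, mul_smul_comm]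
  have h4 : ((rho G - 1) * cosetSum H a 1) * ((rho G - 1) * (∑ y : H, emb ((a * (y : G))⁻¹)))
      = (-2 * Fintype.card H : ℂ) • ((rho G - 1) * cosetSum H a a⁻¹) := by
    rw [mul_assoc, ← mul_assoc (cosetSum H a 1), ← (rhosub_comm (cosetSum H a 1)).eq,
      mul_assoc, ← mul_assoc, rhosub_sq, smul_mul_assoc, coset_mul, mul_smul_comm,
      smul_smul]
  rw [h1, h2, h3, h4]
  module

lemma conj_sum_indep (a : G) (u : Gam G) :
    ∑ γ : Gam G, MonoidAlgebra.of ℂ (Gam G) (γ * ((((a, 1) : Gam G)) * u * ((a, 1) : Gam G)⁻¹) * γ⁻¹)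
      = ∑ γ : Gam G, MonoidAlgebra.of ℂ (Gam G) (γ * u * γ⁻¹) := by
  refine Fintype.sum_equiv (Equiv.mulRight ((a, 1) : Gam G)) _ _ ?_
  intro γ
  congr 1
  show γ * (((a, 1) : Gam G) * u * ((a, 1) : Gam G)⁻¹) * γ⁻¹
      = (γ * ((a, 1) : Gam G)) * u * (γ * ((a, 1) : Gam G))⁻¹
  rw [mul_inv_rev]
  group

lemma conj_el (a g : G) (s : Multiplicative (ZMod 2)) :
    ((a, 1) : Gam G) * ((g, s) : Gam G) * ((a, 1) : Gam G)⁻¹ = ((a * g * a⁻¹ : G), s) := by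
  rw [gam_inv, inv_one]
  exact Prod.ext rfl (by simp)

lemma avg_indep (a b : G) :
    ∑ γ : Gam G, MonoidAlgebra.of ℂ (Gam G) γ * ((rho G - 1) * cosetSum H a a⁻¹) *
        MonoidAlgebra.of ℂ (Gam G) γ⁻¹
      = ∑ γ : Gam G, MonoidAlgebra.of ℂ (Gam G) γ * ((rho G - 1) * cosetSum H b b⁻¹) *
        MonoidAlgebra.of ℂ (Gam G) γ⁻¹ := by
  suffices h : ∀ c : G,
      (∑ γ : Gam G, MonoidAlgebra.of ℂ (Gam G) γ * ((rho G - 1) * cosetSum H c c⁻¹) *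
        MonoidAlgebra.of ℂ (Gam G) γ⁻¹)
      = ∑ x : H, ((∑ γ : Gam G,
            MonoidAlgebra.of ℂ (Gam G) (γ * (((x : G), Multiplicative.ofAdd (1 : ZMod 2))) * γ⁻¹))
          - ∑ γ : Gam G, MonoidAlgebra.of ℂ (Gam G) (γ * (((x : G), 1)) * γ⁻¹)) by
    rw [h a, h b]
  intro c
  rw [cosetSum, Finset.mul_sum]
  simp_rw [rhosub_mul_emb, Finset.mul_sum, Finset.sum_mul, mul_sub, sub_mul, ← map_mul]
  rw [Finset.sum_comm]
  refine Finset.sum_congr rfl (fun x _ => ?_)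
  rw [Finset.sum_sub_distrib]
  congr 1
  · simp_rw [← conj_el c (x : G) (Multiplicative.ofAdd (1 : ZMod 2))]
    exact conj_sum_indep c _
  · simp_rw [← conj_el c (x : G) 1]
    exact conj_sum_indep c _


lemma avg_phi_indep (a b : G) :
    ∑ γ : Gam G, MonoidAlgebra.of ℂ (Gam G) γ *
        ((Tsum G + (rho G - 1) * cosetSum H a 1) *
          iota (Gam G) (Tsum G + (rho G - 1) * cosetSum H a 1)) *
        MonoidAlgebra.of ℂ (Gam G) γ⁻¹
      = ∑ γ : Gam G, MonoidAlgebra.of ℂ (Gam G) γ *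
        ((Tsum G + (rho G - 1) * cosetSum H b 1) *
          iota (Gam G) (Tsum G + (rho G - 1) * cosetSum H b 1)) *
        MonoidAlgebra.of ℂ (Gam G) γ⁻¹ := by
  rw [phi_mul_iota H a, phi_mul_iota H b]
  simp only [mul_add, add_mul, mul_sub, sub_mul, mul_smul_comm, smul_mul_assoc,
    Finset.sum_add_distrib, Finset.sum_sub_distrib, ← Finset.smul_sum]
  have h := avg_indep H a b
  simp only [mul_sub, sub_mul, Finset.sum_sub_distrib] at h
  rw [h]

end Aux

/-- all CM types of signature `(n-1,1)` give the same class function: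
`A⁰_{Φ_{{i}}} = A⁰_{Φ_{{j}}}` for all `i, j`. -/
theorem A0_singleton_eq {G : Type*} [Group G] [Fintype G] (H : Subgroup G)
    [DecidablePred (· ∈ H)] {n : ℕ} (σ : Fin n → G)
    (hσ : Function.Bijective fun i : Fin n => (QuotientGroup.mk (σ i) : G ⧸ H))
    (i j : Fin n) :
    A0 H σ {i} = A0 H σ {j} := by
  have hP : ∀ l : Fin n, Phi H σ {l} = Tsum G + (rho G - 1) * cosetSum H (σ l) 1 := by
    intro l; rw [Phi, Finset.sum_singleton]
  rw [A0, A0, Afun, Afun, hP i, hP j]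
  refine congrArg (((Fintype.card (Gam G) : ℂ))⁻¹ • ·) ?_
  simp_rw [mul_smul_comm, smul_mul_assoc, ← Finset.smul_sum]
  rw [avg_phi_indep H (σ i) (σ j)]

end
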